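/- For every positive integer m, the 2m-th moment K(2m) = E[(τ₁ − τ₂)^{2m}] of the difference of two independent Poisson(1/2) random variables is a positive integer. -/

import Mathlib

/-- `K(p) = E (τ₁ - τ₂)^p` for independent `τ₁, τ₂ ~ Poisson(1/2)`. -/
noncomputable def K (p : ℕ) : ℝ :=
  ∑' k : ℕ, ∑' l : ℕ,
    (Real.exp (-(1/2 : ℝ)) * (1/2 : ℝ) ^ k / (Nat.factorial k)) *
    (Real.exp (-(1/2 : ℝ)) * (1/2 : ℝ) ^ l / (Nat.factorial l)) *
    ((k : ℝ) - (l : ℝ)) ^ p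

open Finset

/-- Poisson(1/2) weights. -/
noncomputable def pp (k : ℕ) : ℝ := Real.exp (-(1/2 : ℝ)) * (1/2 : ℝ) ^ k / (Nat.factorial k)

lemma pp_nonneg (k : ℕ) : 0 ≤ pp k := by unfold pp; positivity

lemma pp_le (k : ℕ) : pp k ≤ (1/2 : ℝ) ^ k := by
  unfold pp
  rw [div_le_iff₀ (by positivity)]
  have h1 : Real.exp (-(1/2 : ℝ)) ≤ 1 := Real.exp_le_one_iff.mpr (by norm_num)
  have h2 : (1 : ℝ) ≤ (Nat.factorial k : ℝ) := Nat.one_le_cast.mpr k.factorial_pos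
  nlinarith [pow_nonneg (by norm_num : (0:ℝ) ≤ 1/2) k]

lemma summable_base (d : ℕ) : Summable (fun k : ℕ => ((k : ℝ) + 1) ^ d * (1/2 : ℝ) ^ k) := by
  have h := summable_pow_mul_geometric_of_norm_lt_one (R := ℝ) d
    (r := 1/2) (by rw [Real.norm_eq_abs, abs_of_pos (by norm_num : (0:ℝ) < 1/2)]; norm_num)
  have h2 : Summable (fun n : ℕ => (((n + 1 : ℕ) : ℝ)) ^ d * (1/2 : ℝ) ^ (n + 1)) :=
    (summable_nat_add_iff 1).mpr h
  refine (h2.mul_left 2).congr fun n => ?_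
  push_cast
  rw [pow_succ]
  ring

lemma summable_pp_mul {f : ℕ → ℝ} (C : ℝ) (d : ℕ)
    (h : ∀ k, |f k| ≤ C * ((k : ℝ) + 1) ^ d) :
    Summable fun k => pp k * f k := by
  apply Summable.of_abs
  refine Summable.of_nonneg_of_le (fun k => abs_nonneg _) (fun k => ?_)
    ((summable_base d).mul_left C)
  rw [abs_mul, abs_of_nonneg (pp_nonneg k)]
  calc pp k * |f k| ≤ (1/2 : ℝ) ^ k * (C * ((k : ℝ) + 1) ^ d) := by
        apply mul_le_mul (pp_le k) (h k) (abs_nonneg _) (by positivity)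
    _ = C * (((k : ℝ) + 1) ^ d * (1/2 : ℝ) ^ k) := by ring

lemma tsum_pp : ∑' k, pp k = 1 := by
  have h : ∀ k : ℕ, pp k = Real.exp (-(1/2 : ℝ)) * ((1/2 : ℝ) ^ k / (Nat.factorial k)) := by
    intro k; unfold pp; ring
  rw [tsum_congr h, tsum_mul_left]
  have : ∑' k : ℕ, (1/2 : ℝ) ^ k / (Nat.factorial k) = Real.exp (1/2) := by
    rw [Real.exp_eq_exp_ℝ, NormedSpace.exp_eq_tsum_div]
  rw [this, ← Real.exp_add]
  norm_num

/-- Moments of Poisson(1/2). -/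
noncomputable def Mo (j : ℕ) : ℝ := ∑' k, pp k * (k : ℝ) ^ j

/-- `So j c = E (c - τ)^j` for `τ ~ Poisson(1/2)`. -/
noncomputable def So (j : ℕ) (c : ℝ) : ℝ := ∑' l, pp l * (c - (l : ℝ)) ^ j

lemma abs_sub_pow_le (c : ℝ) (k j : ℕ) :
    |(c - (k : ℝ)) ^ j| ≤ (|c| + 1) ^ j * ((k : ℝ) + 1) ^ j := by
  rw [abs_pow, ← mul_pow]
  apply pow_le_pow_left₀ (abs_nonneg _)
  have h1 : |c - (k : ℝ)| ≤ |c| + (k : ℝ) := by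
    calc |c - (k : ℝ)| ≤ |c| + |(k : ℝ)| := abs_sub _ _
      _ = |c| + (k : ℝ) := by rw [Nat.abs_cast]
  nlinarith [abs_nonneg c, Nat.cast_nonneg (α := ℝ) k]

lemma summable_So (j : ℕ) (c : ℝ) : Summable fun l : ℕ => pp l * (c - (l : ℝ)) ^ j :=
  summable_pp_mul ((|c| + 1) ^ j) j fun l => by
    have := abs_sub_pow_le c l j; linarith

lemma So_eq (j : ℕ) (c : ℝ) :
    So j c = ∑ i ∈ range (j + 1),
      ((j.choose i : ℝ) * ((-1) ^ (j - i) * c ^ i)) * Mo (j - i) := by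
  unfold So
  have step : ∀ l : ℕ, pp l * (c - (l : ℝ)) ^ j
      = ∑ i ∈ range (j + 1),
        ((j.choose i : ℝ) * ((-1) ^ (j - i) * c ^ i)) * (pp l * (l : ℝ) ^ (j - i)) := by
    intro l
    rw [sub_eq_add_neg, add_pow, Finset.mul_sum]
    refine Finset.sum_congr rfl fun i hi => ?_
    rw [neg_pow]
    ring
  rw [tsum_congr step,
    Summable.tsum_finsetSum fun i _ => (summable_pp_mul 1 (j - i) fun k => by
      rw [abs_pow, Nat.abs_cast, one_mul]
      exact pow_le_pow_left₀ (Nat.cast_nonneg k) (by linarith) _).mul_left _]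
  exact Finset.sum_congr rfl fun i _ => tsum_mul_left

/-- A bound constant for `So p`. -/
noncomputable def CS (p : ℕ) : ℝ := ∑' l, pp l * ((l : ℝ) + 1) ^ p

lemma summable_CS (p : ℕ) : Summable fun l : ℕ => pp l * ((l : ℝ) + 1) ^ p :=
  summable_pp_mul 1 p fun k => by
    rw [one_mul, abs_of_nonneg (by positivity)]

lemma CS_nonneg (p : ℕ) : 0 ≤ CS p :=
  tsum_nonneg fun l => mul_nonneg (pp_nonneg l) (by positivity)

lemma abs_So_le (p : ℕ) (c : ℝ) : |So p c| ≤ CS p * (|c| + 1) ^ p := by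
  unfold So CS
  have hsum : Summable fun l : ℕ => |pp l * (c - (l : ℝ)) ^ p| := (summable_So p c).abs
  have habs : |∑' l, pp l * (c - (l : ℝ)) ^ p| ≤ ∑' l, |pp l * (c - (l : ℝ)) ^ p| := by
    have h' : Summable fun l : ℕ => ‖pp l * (c - (l : ℝ)) ^ p‖ := by
      simp only [Real.norm_eq_abs]; exact hsum
    have h2 := norm_tsum_le_tsum_norm h'
    simp only [Real.norm_eq_abs] at h2
    exact h2
  calc |∑' l, pp l * (c - (l : ℝ)) ^ p| ≤ ∑' l, |pp l * (c - (l : ℝ)) ^ p| := habs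
    _ ≤ ∑' l, (pp l * ((l : ℝ) + 1) ^ p) * (|c| + 1) ^ p := by
        refine Summable.tsum_le_tsum (fun l => ?_) hsum ((summable_CS p).mul_right _)
        rw [abs_mul, abs_of_nonneg (pp_nonneg l)]
        have h := abs_sub_pow_le c l p
        have hp := pp_nonneg l
        nlinarith [abs_nonneg ((c - (l:ℝ)) ^ p)]
    _ = (∑' l, pp l * ((l : ℝ) + 1) ^ p) * (|c| + 1) ^ p := tsum_mul_right
    _ = _ := by ring

lemma abs_So_cast_le (p : ℕ) (a : ℝ) (k : ℕ) :
    |So p ((k : ℝ) + a)| ≤ (CS p * (|a| + 1) ^ p) * ((k : ℝ) + 1) ^ p := by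
  calc |So p ((k : ℝ) + a)| ≤ CS p * (|(k : ℝ) + a| + 1) ^ p := abs_So_le p _
    _ ≤ CS p * ((|a| + 1) * ((k : ℝ) + 1)) ^ p := by
        refine mul_le_mul_of_nonneg_left (pow_le_pow_left₀ (by positivity) ?_ _) (CS_nonneg p)
        have h1 : |(k : ℝ) + a| ≤ (k : ℝ) + |a| := by
          calc |(k : ℝ) + a| ≤ |(k : ℝ)| + |a| := abs_add_le _ _
            _ = (k : ℝ) + |a| := by rw [Nat.abs_cast]
        nlinarith [abs_nonneg a, Nat.cast_nonneg (α := ℝ) k]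
    _ = _ := by rw [mul_pow]; ring

lemma summable_pp_So (j : ℕ) : Summable fun k : ℕ => pp k * So j k :=
  summable_pp_mul (CS j) j fun k => by
    have := abs_So_le j (k : ℝ)
    rwa [Nat.abs_cast] at this

lemma hpp (s : ℕ) : pp (s + 1) * ((s : ℝ) + 1) = (1/2 : ℝ) * pp s := by
  unfold pp
  rw [Nat.factorial_succ, pow_succ]
  have h1 : ((s : ℝ) + 1) ≠ 0 := by positivity
  have h2 : (s.factorial : ℝ) ≠ 0 := Nat.cast_ne_zero.mpr s.factorial_ne_zero
  push_cast
  field_simp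

lemma So_succ (p : ℕ) (c : ℝ) : So (p + 1) c = c * So p c - (1/2 : ℝ) * So p (c - 1) := by
  have hsum2 : Summable (fun l : ℕ => pp l * ((l : ℝ) * (c - (l : ℝ)) ^ p)) := by
    refine summable_pp_mul ((|c| + 1) ^ p) (p + 1) fun l => ?_
    rw [abs_mul, Nat.abs_cast]
    have h := abs_sub_pow_le c l p
    have h2 : (l : ℝ) ≤ (l : ℝ) + 1 := by linarith
    calc (l : ℝ) * |(c - (l : ℝ)) ^ p| ≤ ((l : ℝ) + 1) * ((|c| + 1) ^ p * ((l : ℝ) + 1) ^ p) := by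
          apply mul_le_mul h2 h (abs_nonneg _) (by positivity)
      _ = (|c| + 1) ^ p * ((l : ℝ) + 1) ^ (p + 1) := by rw [pow_succ]; ring
  have step : ∀ l : ℕ, pp l * (c - (l : ℝ)) ^ (p + 1)
      = c * (pp l * (c - (l : ℝ)) ^ p) - pp l * ((l : ℝ) * (c - (l : ℝ)) ^ p) := by
    intro l; rw [pow_succ]; ring
  unfold So
  rw [tsum_congr step, Summable.tsum_sub ((summable_So p c).mul_left c) hsum2, tsum_mul_left]
  congr 1
  rw [Summable.tsum_eq_zero_add hsum2]
  simp only [Nat.cast_zero, zero_mul, mul_zero, zero_add]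
  rw [← tsum_mul_left]
  refine tsum_congr fun s => ?_
  push_cast
  have hc : c - ((s : ℝ) + 1) = (c - 1) - (s : ℝ) := by ring
  rw [hc]
  linear_combination ((c - 1) - (s : ℝ)) ^ p * hpp s

lemma So_add_one (p : ℕ) (c : ℝ) :
    So p (c + 1) = ∑ j ∈ range (p + 1), (p.choose j : ℝ) * So j c := by
  unfold So
  have step : ∀ l : ℕ, pp l * (c + 1 - (l : ℝ)) ^ p
      = ∑ j ∈ range (p + 1), (p.choose j : ℝ) * (pp l * (c - (l : ℝ)) ^ j) := by
    intro l
    have h : c + 1 - (l : ℝ) = (c - (l : ℝ)) + 1 := by ring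
    rw [h, add_pow, Finset.mul_sum]
    exact Finset.sum_congr rfl fun j _ => by rw [one_pow]; ring
  rw [tsum_congr step, Summable.tsum_finsetSum fun j _ => (summable_So j c).mul_left _]
  exact Finset.sum_congr rfl fun j _ => tsum_mul_left

lemma So_sub_one (p : ℕ) (c : ℝ) :
    So p (c - 1) = ∑ j ∈ range (p + 1), (p.choose j : ℝ) * ((-1 : ℝ) ^ (p - j) * So j c) := by
  unfold So
  have step : ∀ l : ℕ, pp l * (c - 1 - (l : ℝ)) ^ p
      = ∑ j ∈ range (p + 1),
          (p.choose j : ℝ) * ((-1 : ℝ) ^ (p - j) * (pp l * (c - (l : ℝ)) ^ j)) := by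
    intro l
    have h : c - 1 - (l : ℝ) = (c - (l : ℝ)) + (-1) := by ring
    rw [h, add_pow, Finset.mul_sum]
    exact Finset.sum_congr rfl fun j _ => by ring
  rw [tsum_congr step,
    Summable.tsum_finsetSum fun j _ => ((summable_So j c).mul_left _).mul_left _]
  refine Finset.sum_congr rfl fun j _ => ?_
  rw [tsum_mul_left, tsum_mul_left]

lemma K_eq (p : ℕ) : K p = ∑' k, pp k * So p (k : ℝ) := by
  unfold K So pp
  refine tsum_congr fun k => ?_
  rw [← tsum_mul_left]
  exact tsum_congr fun l => by ring

lemma K_zero : K 0 = 1 := by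
  rw [K_eq]
  have h : ∀ k : ℕ, pp k * So 0 (k : ℝ) = pp k := by
    intro k
    have : So 0 (k : ℝ) = 1 := by
      unfold So
      simp only [pow_zero, mul_one]
      exact tsum_pp
    rw [this, mul_one]
  rw [tsum_congr h, tsum_pp]

lemma K_succ (p : ℕ) :
    K (p + 1) = ∑ j ∈ range (p + 1),
      (p.choose j : ℝ) * ((1 - (-1 : ℝ) ^ (p - j)) / 2) * K j := by
  rw [K_eq]
  have h1 : ∀ k : ℕ, pp k * So (p + 1) (k : ℝ)
      = (k : ℝ) * (pp k * So p (k : ℝ)) - (1/2 : ℝ) * (pp k * So p ((k : ℝ) - 1)) := by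
    intro k; rw [So_succ]; ring
  have hbase : Summable (fun k : ℕ => pp k * ((k : ℝ) * So p (k : ℝ))) := by
    refine summable_pp_mul (CS p) (p + 1) fun k => ?_
    rw [abs_mul, Nat.abs_cast]
    have h := abs_So_le p (k : ℝ)
    rw [Nat.abs_cast] at h
    have h2 : (k : ℝ) ≤ (k : ℝ) + 1 := by linarith
    calc (k : ℝ) * |So p (k : ℝ)| ≤ ((k : ℝ) + 1) * (CS p * ((k : ℝ) + 1) ^ p) := by
          apply mul_le_mul h2 h (abs_nonneg _) (by positivity)
      _ = CS p * ((k : ℝ) + 1) ^ (p + 1) := by rw [pow_succ]; ring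
  have hs1 : Summable (fun k : ℕ => (k : ℝ) * (pp k * So p (k : ℝ))) :=
    hbase.congr fun k => by ring
  have hs2base : Summable (fun k : ℕ => pp k * So p ((k : ℝ) - 1)) := by
    refine summable_pp_mul (CS p * (|(-1 : ℝ)| + 1) ^ p) p fun k => ?_
    have h := abs_So_cast_le p (-1) k
    rwa [show (k : ℝ) + (-1) = (k : ℝ) - 1 by ring] at h
  have hs2 : Summable (fun k : ℕ => (1/2 : ℝ) * (pp k * So p ((k : ℝ) - 1))) :=
    hs2base.mul_left _
  rw [tsum_congr h1, Summable.tsum_sub hs1 hs2]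
  have e1 : ∑' k : ℕ, (k : ℝ) * (pp k * So p (k : ℝ))
      = (1/2 : ℝ) * ∑' k, pp k * So p ((k : ℝ) + 1) := by
    rw [Summable.tsum_eq_zero_add hs1]
    simp only [Nat.cast_zero, zero_mul, zero_add]
    rw [← tsum_mul_left]
    refine tsum_congr fun t => ?_
    push_cast
    linarith [congrArg (· * So p ((t : ℝ) + 1)) (hpp t)]
  have e2 : ∑' k : ℕ, pp k * So p ((k : ℝ) + 1)
      = ∑ j ∈ range (p + 1), (p.choose j : ℝ) * K j := by
    have step : ∀ k : ℕ, pp k * So p ((k : ℝ) + 1)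
        = ∑ j ∈ range (p + 1), (p.choose j : ℝ) * (pp k * So j (k : ℝ)) := by
      intro k
      rw [So_add_one, Finset.mul_sum]
      exact Finset.sum_congr rfl fun j _ => by ring
    rw [tsum_congr step, Summable.tsum_finsetSum fun j _ => (summable_pp_So j).mul_left _]
    exact Finset.sum_congr rfl fun j _ => by rw [tsum_mul_left, ← K_eq]
  have e3 : ∑' k : ℕ, (1/2 : ℝ) * (pp k * So p ((k : ℝ) - 1))
      = (1/2 : ℝ) * ∑ j ∈ range (p + 1),
          (p.choose j : ℝ) * ((-1 : ℝ) ^ (p - j) * K j) := by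
    rw [tsum_mul_left]
    congr 1
    have step : ∀ k : ℕ, pp k * So p ((k : ℝ) - 1)
        = ∑ j ∈ range (p + 1),
            (p.choose j : ℝ) * ((-1 : ℝ) ^ (p - j) * (pp k * So j (k : ℝ))) := by
      intro k
      rw [So_sub_one, Finset.mul_sum]
      exact Finset.sum_congr rfl fun j _ => by ring
    rw [tsum_congr step,
      Summable.tsum_finsetSum fun j _ => ((summable_pp_So j).mul_left _).mul_left _]
    exact Finset.sum_congr rfl fun j _ => by rw [tsum_mul_left, tsum_mul_left, ← K_eq]
  rw [e1, e2, e3, Finset.mul_sum, Finset.mul_sum, ← Finset.sum_sub_distrib]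
  exact Finset.sum_congr rfl fun j _ => by ring

/-- The integer recurrence: number of partitions of a `p`-set into even blocks. -/
def Kn : ℕ → ℕ
  | 0 => 1
  | (p + 1) => ∑ j ∈ (Finset.range (p + 1)).attach,
      if Odd (p - j.1) then p.choose j.1 * Kn j.1 else 0
decreasing_by exact Finset.mem_range.mp j.2

lemma Kn_zero : Kn 0 = 1 := by rw [Kn]

lemma Kn_succ (p : ℕ) : Kn (p + 1)
    = ∑ j ∈ Finset.range (p + 1), if Odd (p - j) then p.choose j * Kn j else 0 := by
  rw [Kn]
  exact Finset.sum_attach _ fun j => if Odd (p - j) then p.choose j * Kn j else 0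

lemma K_eq_Kn : ∀ n, K n = (Kn n : ℝ) := by
  intro n
  induction n using Nat.strong_induction_on with
  | _ n ih =>
    match n with
    | 0 => rw [K_zero, Kn_zero]; norm_num
    | (p + 1) =>
      rw [K_succ, Kn_succ, Nat.cast_sum]
      refine Finset.sum_congr rfl fun j hj => ?_
      rw [ih j (Finset.mem_range.mp hj)]
      rcases Nat.even_or_odd (p - j) with he | ho
      · rw [if_neg (Nat.not_odd_iff_even.mpr he), he.neg_one_pow]
        push_cast
        ring
      · rw [if_pos ho, ho.neg_one_pow]
        push_cast
        ring

theorem K_even_is_positive_integer (m : ℕ) (hm : 0 < m) :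
    ∃ N : ℕ, 0 < N ∧ K (2 * m) = N := by
  refine ⟨Kn (2 * m), ?_, K_eq_Kn _⟩
  obtain ⟨m', rfl⟩ : ∃ m', m = m' + 1 := ⟨m - 1, (Nat.succ_pred_eq_of_pos hm).symm⟩
  have h2 : 2 * (m' + 1) = (2 * m' + 1) + 1 := by ring
  rw [h2, Kn_succ]
  have h0 : 0 ∈ Finset.range (2 * m' + 1 + 1) := by simp
  have key := Finset.single_le_sum
    (f := fun j => if Odd (2 * m' + 1 - j) then (2 * m' + 1).choose j * Kn j else 0)
    (fun i _ => Nat.zero_le _) h0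
  have h1 : (if Odd (2 * m' + 1 - 0) then (2 * m' + 1).choose 0 * Kn 0 else 0) = 1 := by
    rw [if_pos (by simp [Nat.odd_iff])]
    simp [Kn_zero]
  try simp only at key
  omega
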